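/- arXiv:0810.5641 — 4 statements merged into one kernel-verified Lean document; each statement's English description precedes it below -/
import Mathlib

section
/- Let ⟨⟨θ_α : α ≤ κ⟩, ⟨F_{αβ} : α < β ≤ κ⟩⟩ be a simplified (κ,1)-morass, let α < β < κ, τ₁, τ₂ < θ_α, and f₁, f₂ ∈ F_{αβ} with f₁(τ₁) = f₂(τ₂). Then τ₁ = τ₂ and f₁↾τ₁ = f₂↾τ₁. -/
noncomputable section

open Cardinal Set

/-- A simplified `(κ,1)`-morass (Velleman).  Morass maps are coded as total functions on
ordinals; all axioms only constrain their values below the relevant `θ α`. -/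
structure SimplifiedMorass : Type 2 where
  κ : Cardinal.{0}
  kappa_reg : κ.IsRegular
  kappa_unc : Cardinal.aleph0 < κ
  θ : Ordinal.{0} → Ordinal.{0}
  F : Ordinal.{0} → Ordinal.{0} → Set (Ordinal.{0} → Ordinal.{0})
  /-- (P0)(a) `θ 0 = 1` -/
  theta_zero : θ 0 = 1
  /-- (P0)(a) `θ κ = κ⁺` -/
  theta_top : θ κ.ord = (Order.succ κ).ord
  /-- (P0)(a) `0 < θ α` for `α < κ` -/
  theta_pos : ∀ α, α < κ.ord → 0 < θ α
  /-- (P0)(a) `θ α < κ` for `α < κ` -/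
  theta_lt : ∀ α, α < κ.ord → θ α < κ.ord
  /-- (P0)(b) every `f ∈ F α β` is an order preserving map `θ α → θ β` -/
  F_maps : ∀ α β, α < β → β ≤ κ.ord → ∀ f ∈ F α β,
      (∀ x, x < θ α → f x < θ β) ∧ ∀ x y, x < y → y < θ α → f x < f y
  /-- (P1) `|F α β| < κ` for `α < β < κ` -/
  F_card : ∀ α β, α < β → β < κ.ord → Cardinal.mk (F α β) < Cardinal.lift.{1} κ
  /-- (P2), one inclusion: compositions of morass maps are morass maps -/
  F_comp_mem : ∀ α β γ, α < β → β < γ → γ ≤ κ.ord → ∀ f ∈ F β γ, ∀ g ∈ F α β,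
      ∃ h ∈ F α γ, ∀ x, x < θ α → h x = f (g x)
  /-- (P2), the other inclusion: every morass map factors through any intermediate level -/
  F_comp_factor : ∀ α β γ, α < β → β < γ → γ ≤ κ.ord → ∀ h ∈ F α γ,
      ∃ f ∈ F β γ, ∃ g ∈ F α β, ∀ x, x < θ α → h x = f (g x)
  /-- (P3) `F α (α+1) = {id ↾ θ α, h_α}` where `h_α ↾ δ = id` and `h_α δ ≥ θ α` -/
  F_succ : ∀ α, α < κ.ord →
      (∃ i ∈ F α (α + 1), ∀ x, x < θ α → i x = x) ∧
      ∃ h ∈ F α (α + 1), (∃ δ, δ < θ α ∧ (∀ x, x < δ → h x = x) ∧ θ α ≤ h δ) ∧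
        ∀ f ∈ F α (α + 1), (∀ x, x < θ α → f x = x) ∨ (∀ x, x < θ α → f x = h x)
  /-- (P4) factoring at limit levels -/
  F_limit : ∀ α, α ≤ κ.ord → Order.IsSuccLimit α → ∀ β₁ β₂, β₁ < α → β₂ < α →
      ∀ f₁ ∈ F β₁ α, ∀ f₂ ∈ F β₂ α, ∃ γ, β₁ < γ ∧ β₂ < γ ∧ γ < α ∧
        ∃ g ∈ F γ α, (∃ j₁ ∈ F β₁ γ, ∀ x, x < θ β₁ → f₁ x = g (j₁ x)) ∧
          ∃ j₂ ∈ F β₂ γ, ∀ x, x < θ β₂ → f₂ x = g (j₂ x)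
  /-- (P5) `θ α = ⋃ {f[θ β] : β < α, f ∈ F β α}` for `α > 0` -/
  F_cover : ∀ α, α ≤ κ.ord → 0 < α → ∀ τ, τ < θ α →
      ∃ β, β < α ∧ ∃ f ∈ F β α, ∃ ν, ν < θ β ∧ f ν = τ

namespace SimplifiedMorass

variable (M : SimplifiedMorass)

/-- The tree `T = {⟨α,ν⟩ : α ≤ κ, ν < θ α}` of the morass. -/
def InTree (t : Ordinal × Ordinal) : Prop := t.1 ≤ M.κ.ord ∧ t.2 < M.θ t.1

/-- The tree relation: `⟨α,ν⟩ ≺ ⟨β,τ⟩` iff `α < β` and `f ν = τ` for some `f ∈ F α β`. -/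
def Prec (s t : Ordinal × Ordinal) : Prop :=
  M.InTree s ∧ M.InTree t ∧ s.1 < t.1 ∧ ∃ f ∈ M.F s.1 t.1, f s.2 = t.2

end SimplifiedMorass

/-- Morass maps are injective on their domain. -/
lemma morass_inj (M : SimplifiedMorass) (α β : Ordinal) (hαβ : α < β) (hβ : β ≤ M.κ.ord)
    {f : Ordinal → Ordinal} (hf : f ∈ M.F α β) {x y : Ordinal}
    (hx : x < M.θ α) (hy : y < M.θ α) (hxy : f x = f y) : x = y := by
  have mono := (M.F_maps α β hαβ hβ f hf).2
  rcases lt_trichotomy x y with h | h | h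
  · exact absurd hxy (mono x y h hy).ne
  · exact h
  · exact absurd hxy.symm (mono y x h hx).ne

lemma morass_succ_le (M : SimplifiedMorass) {γ : Ordinal} (hγ : γ < M.κ.ord) :
    γ + 1 ≤ M.κ.ord := by
  have hlim : Order.IsSuccLimit (M.κ.ord) := Cardinal.isSuccLimit_ord M.kappa_unc.le
  rw [Ordinal.add_one_eq_succ]
  exact (hlim.succ_lt hγ).le

/-- The successor-step case of the agreement lemma. -/
lemma morass_succ_agree (M : SimplifiedMorass) (γ : Ordinal) (hγ : γ < M.κ.ord)
    (ν₁ ν₂ : Ordinal) (hν₁ : ν₁ < M.θ γ) (hν₂ : ν₂ < M.θ γ)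
    (g₁ g₂ : Ordinal → Ordinal) (hg₁ : g₁ ∈ M.F γ (γ + 1)) (hg₂ : g₂ ∈ M.F γ (γ + 1))
    (heq : g₁ ν₁ = g₂ ν₂) : ν₁ = ν₂ ∧ ∀ x, x < ν₁ → g₁ x = g₂ x := by
  have hle : γ + 1 ≤ M.κ.ord := morass_succ_le M hγ
  have hlt : γ < γ + 1 := lt_add_one γ
  obtain ⟨-, h, hh, ⟨δ, hδ, hhid, hhδ⟩, hclass⟩ := M.F_succ γ hγ
  have hmono := (M.F_maps γ (γ + 1) hlt hle h hh).2
  have key : ∀ a b (fa fb : Ordinal → Ordinal), a < M.θ γ → b < M.θ γ →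
      (∀ x, x < M.θ γ → fa x = x) → (∀ x, x < M.θ γ → fb x = h x) → fa a = fb b →
      a = b ∧ ∀ x, x < a → fa x = fb x := by
    intro a b fa fb ha hb ida hba hab
    rw [ida a ha, hba b hb] at hab
    rcases lt_or_ge b δ with hbδ | hbδ
    · have hb' : h b = b := hhid b hbδ
      have hab' : a = b := by rw [hab, hb']
      refine ⟨hab', fun x hx => ?_⟩
      have hxθ : x < M.θ γ := hx.trans ha
      rw [ida x hxθ, hba x hxθ, hhid x (hx.trans_le (hab' ▸ hbδ.le))]
    · exfalso
      have hδb : h δ ≤ h b := by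
        rcases eq_or_lt_of_le hbδ with he | he
        · rw [he]
        · exact (hmono δ b he hb).le
      have : M.θ γ ≤ a := by
        rw [hab]; exact hhδ.trans hδb
      exact absurd ha this.not_gt
  rcases hclass g₁ hg₁ with c₁ | c₁ <;> rcases hclass g₂ hg₂ with c₂ | c₂
  · rw [c₁ ν₁ hν₁, c₂ ν₂ hν₂] at heq
    exact ⟨heq, fun x hx => by rw [c₁ x (hx.trans hν₁), c₂ x (hx.trans hν₁)]⟩
  · exact key ν₁ ν₂ g₁ g₂ hν₁ hν₂ c₁ c₂ heq
  · obtain ⟨e, hag⟩ := key ν₂ ν₁ g₂ g₁ hν₂ hν₁ c₂ c₁ heq.symm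
    exact ⟨e.symm, fun x hx => (hag x (e ▸ hx)).symm⟩
  · rw [c₁ ν₁ hν₁, c₂ ν₂ hν₂] at heq
    have e : ν₁ = ν₂ := by
      rcases lt_trichotomy ν₁ ν₂ with he | he | he
      · exact absurd heq (hmono ν₁ ν₂ he hν₂).ne
      · exact he
      · exact absurd heq.symm (hmono ν₂ ν₁ he hν₁).ne
    exact ⟨e, fun x hx => by rw [c₁ x (hx.trans hν₁), c₂ x (hx.trans hν₁)]⟩

lemma morass_agree_aux (M : SimplifiedMorass) :
    ∀ β α, α < β → β < M.κ.ord → ∀ τ₁ τ₂, τ₁ < M.θ α → τ₂ < M.θ α →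
      ∀ f₁ f₂, f₁ ∈ M.F α β → f₂ ∈ M.F α β → f₁ τ₁ = f₂ τ₂ →
      τ₁ = τ₂ ∧ ∀ x, x < τ₁ → f₁ x = f₂ x := by
  intro β
  induction β using Ordinal.induction with
  | h β IH =>
    intro α hαβ hβ τ₁ τ₂ hτ₁ hτ₂ f₁ f₂ hf₁ hf₂ heq
    rcases Ordinal.zero_or_succ_or_isSuccLimit β with h0 | ⟨γ, rfl⟩ | hlim
    · exact absurd (h0 ▸ hαβ) (not_lt_bot (a := α) |> fun h => by simpa using h α)
    · -- successor case
      rw [← Ordinal.add_one_eq_succ] at *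
      have hγκ : γ < M.κ.ord := (lt_add_one γ).trans hβ
      rcases eq_or_lt_of_le (Order.lt_add_one_iff.mp hαβ) with he | hαγ
      · subst he
        exact morass_succ_agree M α hγκ τ₁ τ₂ hτ₁ hτ₂ f₁ f₂ hf₁ hf₂ heq
      · obtain ⟨g₁, hg₁, j₁, hj₁, hfac₁⟩ :=
          M.F_comp_factor α γ (γ + 1) hαγ (lt_add_one γ) hβ.le f₁ hf₁
        obtain ⟨g₂, hg₂, j₂, hj₂, hfac₂⟩ :=
          M.F_comp_factor α γ (γ + 1) hαγ (lt_add_one γ) hβ.le f₂ hf₂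
        have hjτ₁ : j₁ τ₁ < M.θ γ := (M.F_maps α γ hαγ hγκ.le j₁ hj₁).1 τ₁ hτ₁
        have hjτ₂ : j₂ τ₂ < M.θ γ := (M.F_maps α γ hαγ hγκ.le j₂ hj₂).1 τ₂ hτ₂
        have heq' : g₁ (j₁ τ₁) = g₂ (j₂ τ₂) := by
          rw [← hfac₁ τ₁ hτ₁, ← hfac₂ τ₂ hτ₂]; exact heq
        obtain ⟨ejν, hgag⟩ := morass_succ_agree M γ hγκ (j₁ τ₁) (j₂ τ₂) hjτ₁ hjτ₂
          g₁ g₂ hg₁ hg₂ heq'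
        obtain ⟨eτ, hjag⟩ := IH γ (lt_add_one γ) α hαγ hγκ τ₁ τ₂ hτ₁ hτ₂ j₁ j₂ hj₁ hj₂ ejν
        refine ⟨eτ, fun x hx => ?_⟩
        have hxθ : x < M.θ α := hx.trans hτ₁
        have hjx : j₁ x < j₁ τ₁ := (M.F_maps α γ hαγ hγκ.le j₁ hj₁).2 x τ₁ hx hτ₁
        rw [hfac₁ x hxθ, hfac₂ x hxθ, ← hjag x hx, hgag (j₁ x) hjx]
    · -- limit case
      obtain ⟨γ, hγ₁, -, hγβ, g, hg, ⟨j₁, hj₁, hfac₁⟩, j₂, hj₂, hfac₂⟩ :=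
        M.F_limit β hβ.le hlim α α hαβ hαβ f₁ hf₁ f₂ hf₂
      have hγκ : γ < M.κ.ord := hγβ.trans hβ
      have hjτ₁ : j₁ τ₁ < M.θ γ := (M.F_maps α γ hγ₁ hγκ.le j₁ hj₁).1 τ₁ hτ₁
      have hjτ₂ : j₂ τ₂ < M.θ γ := (M.F_maps α γ hγ₁ hγκ.le j₂ hj₂).1 τ₂ hτ₂
      have heq' : g (j₁ τ₁) = g (j₂ τ₂) := by
        rw [← hfac₁ τ₁ hτ₁, ← hfac₂ τ₂ hτ₂]; exact heq
      have ejν : j₁ τ₁ = j₂ τ₂ := morass_inj M γ β hγβ hβ.le hg hjτ₁ hjτ₂ heq'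
      obtain ⟨eτ, hjag⟩ := IH γ hγβ α hγ₁ hγκ τ₁ τ₂ hτ₁ hτ₂ j₁ j₂ hj₁ hj₂ ejν
      refine ⟨eτ, fun x hx => ?_⟩
      have hxθ : x < M.θ α := hx.trans hτ₁
      rw [hfac₁ x hxθ, hfac₂ x hxθ, hjag x hx]

/-- Lemma 2.1 / Lemma 3.1 of [Irrgang4]: morass maps with a common value agree below it. -/
theorem morass_maps_agree_below (M : SimplifiedMorass) (α β : Ordinal)
    (hαβ : α < β) (hβ : β < M.κ.ord) (τ₁ τ₂ : Ordinal)
    (hτ₁ : τ₁ < M.θ α) (hτ₂ : τ₂ < M.θ α)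
    (f₁ f₂ : Ordinal → Ordinal) (hf₁ : f₁ ∈ M.F α β) (hf₂ : f₂ ∈ M.F α β)
    (heq : f₁ τ₁ = f₂ τ₂) :
    τ₁ = τ₂ ∧ ∀ x, x < τ₁ → f₁ x = f₂ x := by
  exact morass_agree_aux M β α hαβ hβ τ₁ τ₂ hτ₁ hτ₂ f₁ f₂ hf₁ hf₂ heq
end
end

section
/- Let a simplified (κ,2)-morass be given. Suppose α < β ≤ κ, f₁, f₂ ∈ F_{αβ}, ζ₁, ζ₂ < θ_α and f₁(ζ₁) = f₂(ζ₂). Then ζ₁ = ζ₂, f₁↾ζ₁ = f₂↾ζ₁, (f₁)_ξ = (f₂)_ξ for all ξ ≤ ζ₁, and (f₁)_{ξη} = (f₂)_{ξη} for all ξ < η ≤ ζ₁. -/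
noncomputable section

open Cardinal Set

/-- The raw data of an embedding between fake gap-1 morasses: an action `base` on the
ordinals `ζ ≤ θ`, order preserving maps `pmap ζ : φ_ζ → φ_{base ζ}`, and maps
`gmap ζ ξ : G ζ ξ → G (base ζ) (base ξ)`. -/
structure PreEmb : Type 1 where
  base : Ordinal.{0} → Ordinal.{0}
  pmap : Ordinal.{0} → Ordinal.{0} → Ordinal.{0}
  gmap : Ordinal.{0} → Ordinal.{0} → (Ordinal.{0} → Ordinal.{0}) → Ordinal.{0} → Ordinal.{0}

/-- Composition of (pre-)embeddings: `(f ∘ g) ζ = f (g ζ)`,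
`(f ∘ g)_ζ = f_{g ζ} ∘ g_ζ`, `(f ∘ g)_{ζξ} = f_{g ζ, g ξ} ∘ g_{ζξ}`. -/
def compPreEmb (f g : PreEmb) : PreEmb where
  base := fun x => f.base (g.base x)
  pmap := fun ζ x => f.pmap (g.base ζ) (g.pmap ζ x)
  gmap := fun ζ ξ b x => f.gmap (g.base ζ) (g.base ξ) (g.gmap ζ ξ b) x

section Emb

variable (φ : Ordinal → Ordinal) (G : Ordinal → Ordinal → Set (Ordinal → Ordinal))
  (δ : Ordinal → Ordinal)

/-- Two pre-embeddings agree (as embeddings of the fake gap-1 morass below `θa`). -/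
def EmbAgree (θa : Ordinal) (f g : PreEmb) : Prop :=
  (∀ ζ, ζ ≤ θa → f.base ζ = g.base ζ) ∧
  (∀ ζ, ζ ≤ θa → ∀ x, x < φ ζ → f.pmap ζ x = g.pmap ζ x) ∧
  (∀ ζ ξ, ζ < ξ → ξ ≤ θa → ∀ b ∈ G ζ ξ, ∀ x, x < φ ζ → f.gmap ζ ξ b x = g.gmap ζ ξ b x)

/-- `f` is an embedding from the fake gap-1 morass `⟨⟨φ_ζ : ζ ≤ θa⟩, ⟨G ζ ξ⟩⟩` to
`⟨⟨φ_ζ : ζ ≤ θb⟩, ⟨G ζ ξ⟩⟩` (where `δ ζ` is the splitting point of `G ζ (ζ+1)`). -/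
def IsEmb (θa θb : Ordinal) (f : PreEmb) : Prop :=
  -- (1) `base` is order preserving `θa + 1 → θb + 1` with `base θa = θb`
  (∀ x y, x < y → y ≤ θa → f.base x < f.base y) ∧ f.base θa = θb ∧
  -- (2) each `pmap ζ` is an order preserving map `φ ζ → φ (base ζ)`
  (∀ ζ, ζ ≤ θa → (∀ x, x < φ ζ → f.pmap ζ x < φ (f.base ζ)) ∧
    ∀ x y, x < y → y < φ ζ → f.pmap ζ x < f.pmap ζ y) ∧
  -- (3) `gmap ζ ξ` maps `G ζ ξ` into `G (base ζ) (base ξ)`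
  (∀ ζ ξ, ζ < ξ → ξ ≤ θa → ∀ b ∈ G ζ ξ, f.gmap ζ ξ b ∈ G (f.base ζ) (f.base ξ)) ∧
  -- (4) splitting points are preserved
  (∀ ζ, ζ < θa → f.pmap ζ (δ ζ) = δ (f.base ζ)) ∧
  -- (5) `f_{ζη} (c ∘ b) = f_{ξη} c ∘ f_{ζξ} b`
  (∀ ζ ξ η, ζ < ξ → ξ < η → η ≤ θa → ∀ b ∈ G ζ ξ, ∀ c ∈ G ξ η, ∀ cb ∈ G ζ η,
    (∀ x, x < φ ζ → cb x = c (b x)) →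
    ∀ x, x < φ ζ → f.gmap ζ η cb x = f.gmap ξ η c (f.gmap ζ ξ b x)) ∧
  -- (6) `f_ξ ∘ b = f_{ζξ} b ∘ f_ζ`
  (∀ ζ ξ, ζ < ξ → ξ ≤ θa → ∀ b ∈ G ζ ξ, ∀ x, x < φ ζ →
    f.pmap ξ (b x) = f.gmap ζ ξ b (f.pmap ζ x))

/-- A left-branching embedding: identity up to `θa`, with `f_{θa} ∈ G θa θb`. -/
def LeftBranching (θa θb : Ordinal) (f : PreEmb) : Prop :=
  IsEmb φ G δ θa θb f ∧
  (∀ ζ, ζ < θa → f.base ζ = ζ) ∧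
  (∀ ζ, ζ < θa → ∀ x, x < φ ζ → f.pmap ζ x = x) ∧
  (∀ ζ ξ, ζ < ξ → ξ < θa → ∀ b ∈ G ζ ξ, ∀ x, x < φ ζ → f.gmap ζ ξ b x = b x) ∧
  (∃ g ∈ G θa θb, ∀ x, x < φ θa → f.pmap θa x = g x) ∧
  (∀ ζ, ζ < θa → ∀ b ∈ G ζ θa, ∀ x, x < φ ζ → f.gmap ζ θa b x = f.pmap θa (b x))

/-- A right-branching embedding with splitting level `η`. -/
def RightBranching (θa θb : Ordinal) (f : PreEmb) : Prop :=
  IsEmb φ G δ θa θb f ∧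
  ∃ η, η < θa ∧
    (∀ x, x < η → f.base x = x) ∧
    (∀ ζ, η + ζ ≤ θa → f.base (η + ζ) = θa + ζ) ∧
    (∀ ζ, ζ < η → ∀ x, x < φ ζ → f.pmap ζ x = x) ∧
    (∀ ζ ξ, ζ < ξ → ξ < η → ∀ b ∈ G ζ ξ, ∀ x, x < φ ζ → f.gmap ζ ξ b x = b x) ∧
    (∃ g ∈ G η θa, ∀ x, x < φ η → f.pmap η x = g x) ∧
    (∀ ζ ξ, η ≤ ζ → ζ < ξ → ξ ≤ θa → ∀ c ∈ G (f.base ζ) (f.base ξ),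
      ∃ b ∈ G ζ ξ, ∀ x, x < φ ζ → f.gmap ζ ξ b x = c x)

end Emb

/-- A simplified `(κ,2)`-morass (Velleman).  It consists of a simplified `(κ⁺,1)`-morass
`gap1 = ⟨⟨φ_ζ : ζ ≤ κ⁺⟩, ⟨G ζ ξ⟩⟩` (with `φ_ζ < κ` for `ζ < κ` and splitting points `δ`),
ordinals `⟨θ_α : α ≤ κ⟩` and families `F α β` of embeddings between the fake gap-1 morasses
below `θ α` and `θ β`. -/
structure Morass2 : Type 2 where
  κ : Cardinal.{0}
  kappa_reg : κ.IsRegular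
  kappa_unc : Cardinal.aleph0 < κ
  gap1 : SimplifiedMorass
  gap1_kappa : gap1.κ = Order.succ κ
  phi_small : ∀ ζ, ζ < κ.ord → gap1.θ ζ < κ.ord
  δ : Ordinal → Ordinal
  delta_lt : ∀ ζ, ζ < (Order.succ κ).ord → δ ζ < gap1.θ ζ
  delta_spec : ∀ ζ, ζ < (Order.succ κ).ord → ∀ b ∈ gap1.F ζ (ζ + 1),
      ¬(∀ x, x < gap1.θ ζ → b x = x) → (∀ x, x < δ ζ → b x = x) ∧ gap1.θ ζ ≤ b (δ ζ)
  θ : Ordinal → Ordinal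
  theta_pos : ∀ α, α < κ.ord → 0 < θ α
  theta_lt : ∀ α, α < κ.ord → θ α < κ.ord
  theta_top : θ κ.ord = (Order.succ κ).ord
  F : Ordinal → Ordinal → Set PreEmb
  /-- members of `F α β` are embeddings -/
  F_emb : ∀ α β, α < β → β ≤ κ.ord → ∀ f ∈ F α β, IsEmb gap1.θ gap1.F δ (θ α) (θ β) f
  /-- (1) `|F α β| < κ` for `α < β < κ` -/
  F_card : ∀ α β, α < β → β < κ.ord → Cardinal.mk (F α β) < Cardinal.lift.{1} κ
  /-- (2) one inclusion of `F α γ = F β γ ∘ F α β` -/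
  F_comp_mem : ∀ α β γ, α < β → β < γ → γ ≤ κ.ord → ∀ f ∈ F β γ, ∀ g ∈ F α β,
      ∃ h ∈ F α γ, EmbAgree gap1.θ gap1.F (θ α) h (compPreEmb f g)
  /-- (2) the other inclusion -/
  F_comp_factor : ∀ α β γ, α < β → β < γ → γ ≤ κ.ord → ∀ h ∈ F α γ,
      ∃ f ∈ F β γ, ∃ g ∈ F α β, EmbAgree gap1.θ gap1.F (θ α) h (compPreEmb f g)
  /-- (3) `F α (α+1)` is an amalgamation: it contains all left-branching embeddings,
  a unique right-branching embedding, and nothing else -/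
  F_amalg : ∀ α, α < κ.ord →
      (∀ f, LeftBranching gap1.θ gap1.F δ (θ α) (θ (α + 1)) f →
        ∃ f' ∈ F α (α + 1), EmbAgree gap1.θ gap1.F (θ α) f f') ∧
      (∃ h ∈ F α (α + 1), RightBranching gap1.θ gap1.F δ (θ α) (θ (α + 1)) h ∧
        ∀ h' ∈ F α (α + 1), RightBranching gap1.θ gap1.F δ (θ α) (θ (α + 1)) h' →
          EmbAgree gap1.θ gap1.F (θ α) h h') ∧
      (∀ f ∈ F α (α + 1), LeftBranching gap1.θ gap1.F δ (θ α) (θ (α + 1)) f ∨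
        RightBranching gap1.θ gap1.F δ (θ α) (θ (α + 1)) f)
  /-- (4) factoring at limit levels -/
  F_limit : ∀ α, α ≤ κ.ord → Order.IsSuccLimit α → ∀ β₁ β₂, β₁ < α → β₂ < α →
      ∀ f₁ ∈ F β₁ α, ∀ f₂ ∈ F β₂ α, ∃ γ, β₁ < γ ∧ β₂ < γ ∧ γ < α ∧
        ∃ g ∈ F γ α, (∃ j₁ ∈ F β₁ γ, EmbAgree gap1.θ gap1.F (θ β₁) f₁ (compPreEmb g j₁)) ∧
          ∃ j₂ ∈ F β₂ γ, EmbAgree gap1.θ gap1.F (θ β₂) f₂ (compPreEmb g j₂)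
  /-- (5)(a) `θ α = ⋃ {f[θ β] : β < α, f ∈ F β α}` at limits -/
  F_cover_theta : ∀ α, α ≤ κ.ord → Order.IsSuccLimit α → ∀ τ, τ < θ α →
      ∃ β, β < α ∧ ∃ f ∈ F β α, ∃ ν, ν < θ β ∧ f.base ν = τ
  /-- (5)(b) `φ ζ = ⋃ {f_ζ̄ [φ ζ̄] : f ∈ F β α, f ζ̄ = ζ}` at limits -/
  F_cover_phi : ∀ α, α ≤ κ.ord → Order.IsSuccLimit α → ∀ ζ, ζ ≤ θ α → ∀ τ, τ < gap1.θ ζ →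
      ∃ β, β < α ∧ ∃ f ∈ F β α, ∃ ζ', ζ' ≤ θ β ∧ f.base ζ' = ζ ∧
        ∃ x, x < gap1.θ ζ' ∧ f.pmap ζ' x = τ
  /-- (5)(c) `G ζ ξ = ⋃ {f_{ζ̄ξ̄} [G ζ̄ ξ̄] : f ∈ F β α, f ζ̄ = ζ, f ξ̄ = ξ}` at limits -/
  F_cover_G : ∀ α, α ≤ κ.ord → Order.IsSuccLimit α → ∀ ζ ξ, ζ < ξ → ξ ≤ θ α → ∀ b ∈ gap1.F ζ ξ,
      ∃ β, β < α ∧ ∃ f ∈ F β α, ∃ ζ' ξ', ζ' < ξ' ∧ ξ' ≤ θ β ∧ f.base ζ' = ζ ∧ f.base ξ' = ξ ∧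
        ∃ c ∈ gap1.F ζ' ξ', ∀ x, x < gap1.θ ζ' → f.gmap ζ' ξ' c x = b x

private lemma aux_inj_lt {f : Ordinal → Ordinal} {T : Ordinal}
    (h : ∀ x y, x < y → y < T → f x < f y) {x y : Ordinal}
    (hx : x < T) (hy : y < T) (hxy : f x = f y) : x = y := by
  rcases lt_trichotomy x y with h' | h' | h'
  · exact absurd hxy (h x y h' hy).ne
  · exact h'
  · exact absurd hxy.symm (h y x h' hx).ne

private lemma aux_inj_le {f : Ordinal → Ordinal} {T : Ordinal}
    (h : ∀ x y, x < y → y ≤ T → f x < f y) {x y : Ordinal}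
    (hx : x ≤ T) (hy : y ≤ T) (hxy : f x = f y) : x = y := by
  rcases lt_trichotomy x y with h' | h' | h'
  · exact absurd hxy (h x y h' hy).ne
  · exact h'
  · exact absurd hxy.symm (h y x h' hx).ne

private lemma aux_le_self {f : Ordinal → Ordinal} {T : Ordinal}
    (h : ∀ x y, x < y → y < T → f x < f y) : ∀ x, x < T → x ≤ f x := by
  intro x
  induction x using Ordinal.induction with
  | _ x ih =>
    intro hx
    by_contra hc
    push_neg at hc
    have h1 : f x ≤ f (f x) := ih (f x) hc (hc.trans hx)
    have h2 : f (f x) < f x := h (f x) x hc hx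
    exact absurd (h1.trans_lt h2) (lt_irrefl _)

/-- The gap-1 analogue (for `SimplifiedMorass`): two morass maps between the same
levels that agree at a point agree below that point (and the preimages coincide). -/
private lemma gap1_agree (S : SimplifiedMorass) :
    ∀ ξ ζ, ζ < ξ → ξ ≤ S.κ.ord → ∀ b ∈ S.F ζ ξ, ∀ c ∈ S.F ζ ξ,
    ∀ ν₁ ν₂, ν₁ < S.θ ζ → ν₂ < S.θ ζ → b ν₁ = c ν₂ →
    ν₁ = ν₂ ∧ ∀ x, x < ν₁ → b x = c x := by
  intro ξ
  induction ξ using Ordinal.induction with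
  | _ ξ IH =>
  intro ζ hζξ hξκ b hb c hc ν₁ ν₂ hν₁ hν₂ hbc
  rcases Ordinal.zero_or_succ_or_isSuccLimit ξ with h0 | ⟨γ, rfl⟩ | hlim
  · exact absurd (h0 ▸ hζξ) (not_lt_zero (a := ζ))
  · -- ξ = γ + 1
    rw [← Ordinal.add_one_eq_succ] at hζξ hξκ hb hc IH
    have hγ1 : γ < γ + 1 := by
      rw [Ordinal.add_one_eq_succ]; exact Order.lt_succ γ
    have hγκ : γ < S.κ.ord := lt_of_lt_of_le hγ1 hξκ
    have hsucc : ∀ b' ∈ S.F γ (γ + 1), ∀ c' ∈ S.F γ (γ + 1), ∀ σ₁ σ₂,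
        σ₁ < S.θ γ → σ₂ < S.θ γ → b' σ₁ = c' σ₂ →
        σ₁ = σ₂ ∧ ∀ x, x < σ₁ → b' x = c' x := by
      obtain ⟨⟨i, hiF, hi⟩, h, hhF, ⟨δ, hδθ, hδid, hδge⟩, hdich⟩ := S.F_succ γ hγκ
      have hmono := (S.F_maps γ (γ + 1) hγ1 hξκ h hhF).2
      have keyid : ∀ g : Ordinal → Ordinal, (∀ x, x < S.θ γ → g x = x) →
          ∀ g' : Ordinal → Ordinal, (∀ x, x < S.θ γ → g' x = h x) → ∀ σ σ', σ < S.θ γ → σ' < S.θ γ →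
          g σ = g' σ' → σ = σ' ∧ ∀ x, x < σ → g x = g' x := by
        intro g hgid g' hgh σ σ' hσ hσ' he
        have hgσ : g σ = σ := hgid σ hσ
        have hg'σ : g' σ' = h σ' := hgh σ' hσ'
        rcases lt_or_ge σ' δ with hlt | hge
        · have hh : h σ' = σ' := hδid σ' hlt
          have hσσ' : σ = σ' := by rw [hgσ, hg'σ, hh] at he; exact he
          subst hσσ'
          refine ⟨rfl, fun x hx => ?_⟩
          rw [hgid x (hx.trans hσ), hgh x (hx.trans hσ), hδid x (hx.trans hlt)]
        · exfalso
          have hθle : S.θ γ ≤ h σ' := by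
            rcases hge.lt_or_eq with hlt' | heq'
            · exact hδge.trans (hmono δ σ' hlt' hσ').le
            · rw [← heq']; exact hδge
          rw [hgσ, hg'σ] at he
          rw [← he] at hθle
          exact absurd hσ (not_lt.mpr hθle)
      intro b' hb' c' hc' σ₁ σ₂ hσ₁ hσ₂ hbc'
      rcases hdich b' hb' with hbid | hbh
      · rcases hdich c' hc' with hcid | hch
        · have heq : σ₁ = σ₂ := by
            rw [hbid σ₁ hσ₁, hcid σ₂ hσ₂] at hbc'; exact hbc'
          subst heq
          exact ⟨rfl, fun x hx => by
            rw [hbid x (hx.trans hσ₁), hcid x (hx.trans hσ₁)]⟩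
        · exact keyid b' hbid c' hch σ₁ σ₂ hσ₁ hσ₂ hbc'
      · rcases hdich c' hc' with hcid | hch
        · obtain ⟨heq, hag⟩ := keyid c' hcid b' hbh σ₂ σ₁ hσ₂ hσ₁ hbc'.symm
          exact ⟨heq.symm, fun x hx =>
            (hag x (by rw [heq]; exact hx)).symm⟩
        · have h1 : h σ₁ = h σ₂ := by
            rw [← hbh σ₁ hσ₁, ← hch σ₂ hσ₂]; exact hbc'
          have heq : σ₁ = σ₂ := aux_inj_lt hmono hσ₁ hσ₂ h1
          subst heq
          exact ⟨rfl, fun x hx => by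
            rw [hbh x (hx.trans hσ₁), hch x (hx.trans hσ₁)]⟩
    have hζγ : ζ ≤ γ := by
      rw [Ordinal.add_one_eq_succ] at hζξ; exact Order.lt_succ_iff.mp hζξ
    rcases hζγ.lt_or_eq with hζγlt | hζγeq
    · -- ζ < γ : factor through γ
      obtain ⟨b₂, hb₂, b₁, hb₁, hbf⟩ :=
        S.F_comp_factor ζ γ (γ + 1) hζγlt hγ1 hξκ b hb
      obtain ⟨c₂, hc₂, c₁, hc₁, hcf⟩ :=
        S.F_comp_factor ζ γ (γ + 1) hζγlt hγ1 hξκ c hc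
      have hb₁ν : b₁ ν₁ < S.θ γ := (S.F_maps ζ γ hζγlt hγκ.le b₁ hb₁).1 ν₁ hν₁
      have hc₁ν : c₁ ν₂ < S.θ γ := (S.F_maps ζ γ hζγlt hγκ.le c₁ hc₁).1 ν₂ hν₂
      have heq2 : b₂ (b₁ ν₁) = c₂ (c₁ ν₂) := by
        rw [← hbf ν₁ hν₁, ← hcf ν₂ hν₂]; exact hbc
      obtain ⟨hτ, hag2⟩ := hsucc b₂ hb₂ c₂ hc₂ _ _ hb₁ν hc₁ν heq2
      obtain ⟨hν, hag1⟩ := IH γ hγ1 ζ hζγlt hγκ.le b₁ hb₁ c₁ hc₁ ν₁ ν₂ hν₁ hν₂ hτ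
      subst hν
      refine ⟨rfl, fun x hx => ?_⟩
      have hxlt : b₁ x < b₁ ν₁ := (S.F_maps ζ γ hζγlt hγκ.le b₁ hb₁).2 x ν₁ hx hν₁
      rw [hbf x (hx.trans hν₁), hcf x (hx.trans hν₁), ← hag1 x hx]
      exact hag2 (b₁ x) hxlt
    · subst hζγeq
      exact hsucc b hb c hc ν₁ ν₂ hν₁ hν₂ hbc
  · -- ξ limit
    obtain ⟨γ, hζγ, -, hγξ, g, hg, ⟨j₁, hj₁, hbg⟩, ⟨j₂, hj₂, hcg⟩⟩ :=
      S.F_limit ξ hξκ hlim ζ ζ hζξ hζξ b hb c hc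
    have hγκ : γ ≤ S.κ.ord := hγξ.le.trans hξκ
    have hj₁ν : j₁ ν₁ < S.θ γ := (S.F_maps ζ γ hζγ hγκ j₁ hj₁).1 ν₁ hν₁
    have hj₂ν : j₂ ν₂ < S.θ γ := (S.F_maps ζ γ hζγ hγκ j₂ hj₂).1 ν₂ hν₂
    have hgmono := (S.F_maps γ ξ hγξ hξκ g hg).2
    have hjj : j₁ ν₁ = j₂ ν₂ := aux_inj_lt hgmono hj₁ν hj₂ν (by
      rw [← hbg ν₁ hν₁, ← hcg ν₂ hν₂]; exact hbc)
    obtain ⟨hν, hag⟩ := IH γ hγξ ζ hζγ hγκ j₁ hj₁ j₂ hj₂ ν₁ ν₂ hν₁ hν₂ hjj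
    subst hν
    exact ⟨rfl, fun x hx => by
      rw [hbg x (hx.trans hν₁), hcg x (hx.trans hν₁), hag x hx]⟩

private lemma theta_le_aux (M : Morass2) {β : Ordinal} (hβ : β ≤ M.κ.ord) :
    M.θ β ≤ M.gap1.κ.ord := by
  rw [M.gap1_kappa]
  rcases hβ.lt_or_eq with h | h
  · exact le_trans (M.theta_lt β h).le (Cardinal.ord_le_ord.mpr (Order.le_succ _))
  · rw [h, M.theta_top]

private lemma succ_key (M : Morass2) {γ : Ordinal} (hγκ : γ < M.κ.ord)
    (_hγ1κ : γ + 1 ≤ M.κ.ord) :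
    ∀ f₁ ∈ M.F γ (γ + 1), ∀ f₂ ∈ M.F γ (γ + 1), ∀ τ₁ τ₂,
      τ₁ < M.θ γ → τ₂ < M.θ γ → f₁.base τ₁ = f₂.base τ₂ →
      τ₁ = τ₂ ∧ (∀ x, x < τ₁ → f₁.base x = f₂.base x) ∧
        (∀ ξ, ξ ≤ τ₁ → ∀ x, x < M.gap1.θ ξ → f₁.pmap ξ x = f₂.pmap ξ x) := by
  obtain ⟨-, ⟨h, hhmem, hhR, huniq⟩, hclass⟩ := M.F_amalg γ hγκ
  have mixed : ∀ g₁ g₂ : PreEmb,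
      LeftBranching M.gap1.θ M.gap1.F M.δ (M.θ γ) (M.θ (γ + 1)) g₁ →
      RightBranching M.gap1.θ M.gap1.F M.δ (M.θ γ) (M.θ (γ + 1)) g₂ →
      ∀ σ₁ σ₂, σ₁ < M.θ γ → σ₂ < M.θ γ → g₁.base σ₁ = g₂.base σ₂ →
      σ₁ = σ₂ ∧ (∀ x, x < σ₁ → g₁.base x = g₂.base x) ∧
        (∀ ξ, ξ ≤ σ₁ → ∀ x, x < M.gap1.θ ξ → g₁.pmap ξ x = g₂.pmap ξ x) := by
    rintro g₁ g₂ ⟨hE₁, hb₁, hp₁, -, -, -⟩ ⟨hE₂, η, hηθ, hbid, hbsh, hpid, -, -, -⟩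
      σ₁ σ₂ hσ₁ hσ₂ he
    have hbσ₁ : g₁.base σ₁ = σ₁ := hb₁ σ₁ hσ₁
    rcases lt_or_ge σ₂ η with hlt | hge
    · have hb2 : g₂.base σ₂ = σ₂ := hbid σ₂ hlt
      have heq : σ₁ = σ₂ := by rw [hbσ₁, hb2] at he; exact he
      subst heq
      refine ⟨rfl, fun x hx => ?_, fun ξ hξ x hx => ?_⟩
      · rw [hb₁ x (hx.trans hσ₁), hbid x (hx.trans hlt)]
      · rw [hp₁ ξ (lt_of_le_of_lt hξ hσ₁) x hx, hpid ξ (lt_of_le_of_lt hξ hlt) x hx]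
    · exfalso
      obtain ⟨τ, rfl⟩ : ∃ τ, η + τ = σ₂ := ⟨σ₂ - η, Ordinal.add_sub_cancel_of_le hge⟩
      have hb2 : g₂.base (η + τ) = M.θ γ + τ := hbsh τ hσ₂.le
      have hσeq : σ₁ = M.θ γ + τ := by rw [hbσ₁] at he; rw [he, hb2]
      have hge2 : M.θ γ ≤ σ₁ := by rw [hσeq]; exact le_self_add
      exact absurd hσ₁ (not_lt.mpr hge2)
  intro f₁ hf₁ f₂ hf₂ τ₁ τ₂ hτ₁ hτ₂ he
  rcases hclass f₁ hf₁ with hL₁ | hR₁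
  · rcases hclass f₂ hf₂ with hL₂ | hR₂
    · obtain ⟨-, hb₁, hp₁, -, -, -⟩ := hL₁
      obtain ⟨-, hb₂, hp₂, -, -, -⟩ := hL₂
      have heq : τ₁ = τ₂ := by rw [hb₁ τ₁ hτ₁, hb₂ τ₂ hτ₂] at he; exact he
      subst heq
      exact ⟨rfl, fun x hx => by rw [hb₁ x (hx.trans hτ₁), hb₂ x (hx.trans hτ₁)],
        fun ξ hξ x hx => by
          rw [hp₁ ξ (lt_of_le_of_lt hξ hτ₁) x hx, hp₂ ξ (lt_of_le_of_lt hξ hτ₁) x hx]⟩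
    · exact mixed f₁ f₂ hL₁ hR₂ τ₁ τ₂ hτ₁ hτ₂ he
  · rcases hclass f₂ hf₂ with hL₂ | hR₂
    · obtain ⟨heq, hbag, hpag⟩ := mixed f₂ f₁ hL₂ hR₁ τ₂ τ₁ hτ₂ hτ₁ he.symm
      subst heq
      exact ⟨rfl, fun x hx => (hbag x hx).symm, fun ξ hξ x hx => (hpag ξ hξ x hx).symm⟩
    · obtain ⟨hb1, hp1, -⟩ := huniq f₁ hf₁ hR₁
      obtain ⟨hb2, hp2, -⟩ := huniq f₂ hf₂ hR₂
      have hmono := hhR.1.1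
      have heq : τ₁ = τ₂ := aux_inj_le hmono hτ₁.le hτ₂.le (by
        rw [hb1 τ₁ hτ₁.le, hb2 τ₂ hτ₂.le]; exact he)
      subst heq
      refine ⟨rfl, fun x hx => ?_, fun ξ hξ x hx => ?_⟩
      · rw [← hb1 x (hx.trans hτ₁).le, ← hb2 x (hx.trans hτ₁).le]
      · rw [← hp1 ξ (hξ.trans hτ₁.le) x hx, ← hp2 ξ (hξ.trans hτ₁.le) x hx]

private lemma gmap_agree (M : Morass2) {α β : Ordinal} (hαβ : α < β) (hβ : β ≤ M.κ.ord)
    {f₁ f₂ : PreEmb} (hf₁ : f₁ ∈ M.F α β) (hf₂ : f₂ ∈ M.F α β)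
    {ξ η : Ordinal} (hξη : ξ < η) (hη : η < M.θ α)
    (hbξ : f₁.base ξ = f₂.base ξ) (hbη : f₁.base η = f₂.base η)
    (hpξ : ∀ x, x < M.gap1.θ ξ → f₁.pmap ξ x = f₂.pmap ξ x)
    (hpη : ∀ x, x < M.gap1.θ η → f₁.pmap η x = f₂.pmap η x) :
    ∀ b ∈ M.gap1.F ξ η, ∀ x, x < M.gap1.θ ξ → f₁.gmap ξ η b x = f₂.gmap ξ η b x := by
  intro b hb x hx
  obtain ⟨hm₁, ht₁, hpm₁, hgm₁, -, -, hc₁⟩ := M.F_emb α β hαβ hβ f₁ hf₁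
  obtain ⟨hm₂, ht₂, hpm₂, hgm₂, -, -, hc₂⟩ := M.F_emb α β hαβ hβ f₂ hf₂
  have hηθ : η ≤ M.θ α := hη.le
  have hθα : M.θ α ≤ M.gap1.κ.ord := theta_le_aux M (hαβ.le.trans hβ)
  have hηκ : η ≤ M.gap1.κ.ord := (hη.trans_le hθα).le
  have hbx : b x < M.gap1.θ η := (M.gap1.F_maps ξ η hξη hηκ b hb).1 x hx
  have hpmξ := hpm₁ ξ (hξη.le.trans hηθ)
  have hple : x ≤ f₁.pmap ξ x := aux_le_self hpmξ.2 x hx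
  have e₁ : f₁.gmap ξ η b (f₁.pmap ξ x) = f₁.pmap η (b x) :=
    (hc₁ ξ η hξη hηθ b hb x hx).symm
  have e₂ : f₂.gmap ξ η b (f₂.pmap ξ x) = f₂.pmap η (b x) :=
    (hc₂ ξ η hξη hηθ b hb x hx).symm
  have hpeq : f₂.pmap ξ x = f₁.pmap ξ x := (hpξ x hx).symm
  have e₂' : f₂.gmap ξ η b (f₁.pmap ξ x) = f₁.pmap η (b x) := by
    rw [← hpeq, e₂, ← hpη (b x) hbx]
  rcases hple.lt_or_eq with hlt | heqp
  · have hd₁ : f₁.gmap ξ η b ∈ M.gap1.F (f₁.base ξ) (f₁.base η) :=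
      hgm₁ ξ η hξη hηθ b hb
    have hd₂ : f₂.gmap ξ η b ∈ M.gap1.F (f₁.base ξ) (f₁.base η) := by
      rw [hbξ, hbη]; exact hgm₂ ξ η hξη hηθ b hb
    have hblt : f₁.base ξ < f₁.base η := hm₁ ξ η hξη hηθ
    have hbηκ : f₁.base η ≤ M.gap1.κ.ord := by
      have h1 : f₁.base η < f₁.base (M.θ α) := hm₁ η (M.θ α) hη le_rfl
      rw [ht₁] at h1
      exact (h1.trans_le (theta_le_aux M hβ)).le
    have hplt : f₁.pmap ξ x < M.gap1.θ (f₁.base ξ) := hpmξ.1 x hx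
    have heqd : f₁.gmap ξ η b (f₁.pmap ξ x) = f₂.gmap ξ η b (f₁.pmap ξ x) := by
      rw [e₁, e₂']
    obtain ⟨-, hag⟩ := gap1_agree M.gap1 (f₁.base η) (f₁.base ξ) hblt hbηκ
      (f₁.gmap ξ η b) hd₁ (f₂.gmap ξ η b) hd₂ _ _ hplt hplt heqd
    exact hag x hlt
  · rw [← heqp] at e₁ e₂'
    rw [e₁, e₂']

private lemma base_pmap_agree (M : Morass2) :
    ∀ β α, α < β → β ≤ M.κ.ord → ∀ f₁ ∈ M.F α β, ∀ f₂ ∈ M.F α β,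
    ∀ ζ₁ ζ₂, ζ₁ < M.θ α → ζ₂ < M.θ α → f₁.base ζ₁ = f₂.base ζ₂ →
    ζ₁ = ζ₂ ∧ (∀ x, x < ζ₁ → f₁.base x = f₂.base x) ∧
      (∀ ξ, ξ ≤ ζ₁ → ∀ x, x < M.gap1.θ ξ → f₁.pmap ξ x = f₂.pmap ξ x) := by
  intro β
  induction β using Ordinal.induction with
  | _ β IH =>
  intro α hαβ hβ f₁ hf₁ f₂ hf₂ ζ₁ ζ₂ hζ₁ hζ₂ he
  rcases Ordinal.zero_or_succ_or_isSuccLimit β with h0 | ⟨γ, rfl⟩ | hlim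
  · exact absurd (h0 ▸ hαβ) (not_lt_zero (a := α))
  · rw [← Ordinal.add_one_eq_succ] at hβ hf₁ hf₂ hαβ IH
    have hγ1 : γ < γ + 1 := by
      rw [Ordinal.add_one_eq_succ]; exact Order.lt_succ γ
    have hγκ : γ < M.κ.ord := lt_of_lt_of_le hγ1 hβ
    have hαγ : α ≤ γ := by
      rw [Ordinal.add_one_eq_succ] at hαβ; exact Order.lt_succ_iff.mp hαβ
    rcases hαγ.lt_or_eq with hlt | heqα
    · obtain ⟨h₁, hh₁, g₁, hg₁, hA₁⟩ :=
        M.F_comp_factor α γ (γ + 1) hlt hγ1 hβ f₁ hf₁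
      obtain ⟨h₂, hh₂, g₂, hg₂, hA₂⟩ :=
        M.F_comp_factor α γ (γ + 1) hlt hγ1 hβ f₂ hf₂
      obtain ⟨hA₁b, hA₁p, -⟩ := hA₁
      obtain ⟨hA₂b, hA₂p, -⟩ := hA₂
      obtain ⟨hgm₁, hgt₁, hgp₁, -, -, -, -⟩ := M.F_emb α γ hlt hγκ.le g₁ hg₁
      obtain ⟨hgm₂, hgt₂, -, -, -, -, -⟩ := M.F_emb α γ hlt hγκ.le g₂ hg₂
      have hτ₁ : g₁.base ζ₁ < M.θ γ := by
        rw [← hgt₁]; exact hgm₁ ζ₁ (M.θ α) hζ₁ le_rfl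
      have hτ₂ : g₂.base ζ₂ < M.θ γ := by
        rw [← hgt₂]; exact hgm₂ ζ₂ (M.θ α) hζ₂ le_rfl
      have heq' : h₁.base (g₁.base ζ₁) = h₂.base (g₂.base ζ₂) := by
        have e1 := hA₁b ζ₁ hζ₁.le
        have e2 := hA₂b ζ₂ hζ₂.le
        simp only [compPreEmb] at e1 e2
        rw [← e1, ← e2]; exact he
      obtain ⟨hτeq, hsb, hsp⟩ :=
        succ_key M hγκ hβ h₁ hh₁ h₂ hh₂ _ _ hτ₁ hτ₂ heq'
      obtain ⟨hζeq, hgb, hgp⟩ :=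
        IH γ hγ1 α hlt hγκ.le g₁ hg₁ g₂ hg₂ ζ₁ ζ₂ hζ₁ hζ₂ hτeq
      subst hζeq
      refine ⟨rfl, fun x hx => ?_, fun ρ hρ x hx => ?_⟩
      · have e1 := hA₁b x (hx.trans hζ₁).le
        have e2 := hA₂b x (hx.trans hζ₁).le
        simp only [compPreEmb] at e1 e2
        rw [e1, e2, ← hgb x hx]
        exact hsb (g₁.base x) (hgm₁ x ζ₁ hx hζ₁.le)
      · have e1 := hA₁p ρ (hρ.trans hζ₁.le) x hx
        have e2 := hA₂p ρ (hρ.trans hζ₁.le) x hx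
        simp only [compPreEmb] at e1 e2
        have hgbρ : g₁.base ρ = g₂.base ρ := by
          rcases hρ.lt_or_eq with h' | h'
          · exact hgb ρ h'
          · rw [h']; exact hτeq
        have hgpρ : g₁.pmap ρ x = g₂.pmap ρ x := hgp ρ hρ x hx
        have hlvl : g₁.base ρ ≤ g₁.base ζ₁ := by
          rcases hρ.lt_or_eq with h' | h'
          · exact (hgm₁ ρ ζ₁ h' hζ₁.le).le
          · rw [h']
        have harg : g₁.pmap ρ x < M.gap1.θ (g₁.base ρ) :=
          (hgp₁ ρ (hρ.trans hζ₁.le)).1 x hx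
        rw [e1, e2, ← hgbρ, ← hgpρ]
        exact hsp (g₁.base ρ) hlvl (g₁.pmap ρ x) harg
    · subst heqα
      exact succ_key M hγκ hβ f₁ hf₁ f₂ hf₂ ζ₁ ζ₂ hζ₁ hζ₂ he
  · obtain ⟨γ, hαγ, -, hγβ, g, hgmem, ⟨j₁, hj₁, hA₁⟩, ⟨j₂, hj₂, hA₂⟩⟩ :=
      M.F_limit β hβ hlim α α hαβ hαβ f₁ hf₁ f₂ hf₂
    obtain ⟨hA₁b, hA₁p, -⟩ := hA₁
    obtain ⟨hA₂b, hA₂p, -⟩ := hA₂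
    have hγκ : γ ≤ M.κ.ord := hγβ.le.trans hβ
    obtain ⟨hjm₁, hjt₁, hjp₁, -, -, -, -⟩ := M.F_emb α γ hαγ hγκ j₁ hj₁
    obtain ⟨hjm₂, hjt₂, -, -, -, -, -⟩ := M.F_emb α γ hαγ hγκ j₂ hj₂
    obtain ⟨hgm, -, -, -, -, -, -⟩ := M.F_emb γ β hγβ hβ g hgmem
    have hτ₁ : j₁.base ζ₁ < M.θ γ := by
      rw [← hjt₁]; exact hjm₁ ζ₁ (M.θ α) hζ₁ le_rfl
    have hτ₂ : j₂.base ζ₂ < M.θ γ := by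
      rw [← hjt₂]; exact hjm₂ ζ₂ (M.θ α) hζ₂ le_rfl
    have hjj : j₁.base ζ₁ = j₂.base ζ₂ := by
      apply aux_inj_le hgm hτ₁.le hτ₂.le
      have e1 := hA₁b ζ₁ hζ₁.le
      have e2 := hA₂b ζ₂ hζ₂.le
      simp only [compPreEmb] at e1 e2
      rw [← e1, ← e2]; exact he
    obtain ⟨hζeq, hjb, hjp⟩ :=
      IH γ hγβ α hαγ hγκ j₁ hj₁ j₂ hj₂ ζ₁ ζ₂ hζ₁ hζ₂ hjj
    subst hζeq
    refine ⟨rfl, fun x hx => ?_, fun ρ hρ x hx => ?_⟩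
    · have e1 := hA₁b x (hx.trans hζ₁).le
      have e2 := hA₂b x (hx.trans hζ₁).le
      simp only [compPreEmb] at e1 e2
      rw [e1, e2, hjb x hx]
    · have e1 := hA₁p ρ (hρ.trans hζ₁.le) x hx
      have e2 := hA₂p ρ (hρ.trans hζ₁.le) x hx
      simp only [compPreEmb] at e1 e2
      have hgbρ : j₁.base ρ = j₂.base ρ := by
        rcases hρ.lt_or_eq with h' | h'
        · exact hjb ρ h'
        · rw [h']; exact hjj
      rw [e1, e2, hgbρ, hjp ρ hρ x hx]


/-- Velleman's lemma 2.2 (Lemma 2.4 of the paper): if `f₁, f₂ ∈ F α β` and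
`f₁ ζ₁ = f₂ ζ₂` for some `ζ₁, ζ₂ < θ α`, then `ζ₁ = ζ₂`, `f₁ ↾ ζ₁ = f₂ ↾ ζ₁`,
`(f₁)_ξ = (f₂)_ξ` for all `ξ ≤ ζ₁` and `(f₁)_{ξη} = (f₂)_{ξη}` for all `ξ < η ≤ ζ₁`. -/
theorem morass2_embeddings_agree_below (M : Morass2) (α β : Ordinal)
    (hαβ : α < β) (hβ : β ≤ M.κ.ord) (f₁ f₂ : PreEmb)
    (hf₁ : f₁ ∈ M.F α β) (hf₂ : f₂ ∈ M.F α β) (ζ₁ ζ₂ : Ordinal)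
    (hζ₁ : ζ₁ < M.θ α) (hζ₂ : ζ₂ < M.θ α) (heq : f₁.base ζ₁ = f₂.base ζ₂) :
    ζ₁ = ζ₂ ∧
    (∀ x, x < ζ₁ → f₁.base x = f₂.base x) ∧
    (∀ ξ, ξ ≤ ζ₁ → ∀ x, x < M.gap1.θ ξ → f₁.pmap ξ x = f₂.pmap ξ x) ∧
    (∀ ξ η, ξ < η → η ≤ ζ₁ → ∀ b ∈ M.gap1.F ξ η, ∀ x, x < M.gap1.θ ξ →
      f₁.gmap ξ η b x = f₂.gmap ξ η b x) := by
  obtain ⟨hζeq, hbag, hpag⟩ :=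
    base_pmap_agree M β α hαβ hβ f₁ hf₁ f₂ hf₂ ζ₁ ζ₂ hζ₁ hζ₂ heq
  subst hζeq
  refine ⟨rfl, hbag, hpag, fun ξ η hξη hη b hb x hx => ?_⟩
  have hbξ : f₁.base ξ = f₂.base ξ := hbag ξ (hξη.trans_le hη)
  have hbη : f₁.base η = f₂.base η := by
    rcases hη.lt_or_eq with h' | h'
    · exact hbag η h'
    · rw [h']; exact heq
  exact gmap_agree M hαβ hβ hf₁ hf₂ hξη (lt_of_le_of_lt hη hζ₁)
    hbξ hbη (hpag ξ (hξη.le.trans hη)) (hpag η hη) b hb x hx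
end
end

section
/- Let a simplified (κ,2)-morass be given. Then: (a) for all ζ < ξ ≤ κ⁺, id↾φ_ζ ∈ G_{ζξ}; (b) for all α < β ≤ κ there is an embedding g ∈ F_{αβ} such that g↾θ_α = id↾θ_α. -/
noncomputable section

open Cardinal Set

/-! ### Auxiliary abstract framework

We abstract the common structure of the families `G ζ ξ` of a simplified `(κ⁺,1)`-morass and
the families `F α β` of embeddings of a simplified `(κ,2)`-morass (acting via `base`):
order-preserving maps between levels, closed under composition and factoring, with a
splitting structure at successors and amalgamation/covering at limits.  In this abstract
setting we prove that identity maps belong to every family. -/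

structure AbsMorass (σ : Type 1) : Type 1 where
  θ : Ordinal.{0} → Ordinal.{0}
  top : Ordinal.{0}
  Fam : Ordinal.{0} → Ordinal.{0} → Set σ
  ap : σ → Ordinal.{0} → Ordinal.{0}
  top_limit : Order.IsSuccLimit top
  pos : ∀ α, α ≤ top → 0 < θ α
  mono : ∀ α β, α < β → β ≤ top → ∀ f ∈ Fam α β,
    (∀ x, x < θ α → ap f x < θ β) ∧ ∀ x y, x < y → y < θ α → ap f x < ap f y
  comp_mem : ∀ α β γ, α < β → β < γ → γ ≤ top → ∀ f ∈ Fam β γ, ∀ g ∈ Fam α β,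
    ∃ h ∈ Fam α γ, ∀ x, x < θ α → ap h x = ap f (ap g x)
  comp_factor : ∀ α β γ, α < β → β < γ → γ ≤ top → ∀ h ∈ Fam α γ,
    ∃ f ∈ Fam β γ, ∃ g ∈ Fam α β, ∀ x, x < θ α → ap h x = ap f (ap g x)
  succ_id : ∀ α, α < top → ∃ i ∈ Fam α (α + 1), ∀ x, x < θ α → ap i x = x
  succ_split : ∀ α, α < top → ∀ f ∈ Fam α (α + 1), ∃ δ, δ ≤ θ α ∧
    (∀ x, x < δ → ap f x = x) ∧ (∀ x, δ ≤ x → x < θ α → θ α ≤ ap f x)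
  theta_succ_lt : ∀ α, α < top → θ α < θ (α + 1)
  limit_amalg : ∀ β, β ≤ top → Order.IsSuccLimit β → ∀ α₁ α₂, α₁ < β → α₂ < β →
    ∀ f₁ ∈ Fam α₁ β, ∀ f₂ ∈ Fam α₂ β, ∃ γ, α₁ < γ ∧ α₂ < γ ∧ γ < β ∧
      ∃ g ∈ Fam γ β, (∃ j₁ ∈ Fam α₁ γ, ∀ x, x < θ α₁ → ap f₁ x = ap g (ap j₁ x)) ∧
        ∃ j₂ ∈ Fam α₂ γ, ∀ x, x < θ α₂ → ap f₂ x = ap g (ap j₂ x)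
  limit_cover : ∀ β, β ≤ top → Order.IsSuccLimit β → ∀ τ, τ < θ β →
    ∃ γ, γ < β ∧ ∃ f ∈ Fam γ β, ∃ ν, ν < θ γ ∧ ap f ν = τ

namespace AbsMorass

variable {σ : Type 1} (A : AbsMorass σ)

theorem le_ap {α β : Ordinal} {f : σ} (hab : α < β) (hb : β ≤ A.top) (hf : f ∈ A.Fam α β) :
    ∀ x, x < A.θ α → x ≤ A.ap f x := by
  intro x
  induction x using Ordinal.induction with
  | _ x IH =>
    intro hx
    by_contra h
    push_neg at h
    have h1 := IH (A.ap f x) h (h.trans hx)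
    have h2 := (A.mono α β hab hb f hf).2 (A.ap f x) x h hx
    exact absurd (h1.trans_lt h2) (lt_irrefl _)

theorem theta_le {α β : Ordinal} {f : σ} (hab : α < β) (hb : β ≤ A.top)
    (hf : f ∈ A.Fam α β) : A.θ α ≤ A.θ β := by
  by_contra h
  push_neg at h
  have h1 := A.le_ap hab hb hf (A.θ β) h
  have h2 := (A.mono α β hab hb f hf).1 (A.θ β) h
  exact absurd (h1.trans_lt h2) (lt_irrefl _)

/-- The main abstract lemma: every map in `Fam α β` splits (it is the identity below some
`δ` and is `≥ θ α` from `δ` on), and `Fam α β` contains an identity map. -/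
theorem main : ∀ β, β ≤ A.top →
    (∀ α, α < β → ∀ f ∈ A.Fam α β, ∃ δ, δ ≤ A.θ α ∧ (∀ x, x < δ → A.ap f x = x) ∧
      (∀ x, δ ≤ x → x < A.θ α → A.θ α ≤ A.ap f x)) ∧
    (∀ α, α < β → ∃ g ∈ A.Fam α β, ∀ x, x < A.θ α → A.ap g x = x) := by
  intro β
  induction β using Ordinal.induction with
  | _ β IH =>
    intro hβtop
    rcases Ordinal.zero_or_succ_or_isSuccLimit β with h0 | ⟨γ, rfl⟩ | hlim
    · subst h0
      exact ⟨fun α h => absurd h (zero_le : (0 : Ordinal) ≤ α).not_gt,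
             fun α h => absurd h (zero_le : (0 : Ordinal) ≤ α).not_gt⟩
    · -- successor case
      rw [← Ordinal.add_one_eq_succ] at hβtop ⊢
      have hγβ : γ < γ + 1 := by
        rw [Ordinal.add_one_eq_succ]; exact Order.lt_succ γ
      have hγtop : γ < A.top := lt_of_lt_of_le hγβ hβtop
      have IHγ := IH γ hγβ hγtop.le
      constructor
      · intro α hα f hf
        have hαγ : α ≤ γ := by
          rw [Ordinal.add_one_eq_succ] at hα; exact Order.lt_succ_iff.1 hα
        rcases eq_or_lt_of_le hαγ with rfl | hlt
        · exact A.succ_split α hγtop f hf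
        · obtain ⟨f', hf', g', hg', hfac⟩ :=
            A.comp_factor α γ (γ + 1) hlt hγβ hβtop f hf
          obtain ⟨δ₁, hδ₁θ, h₁id, h₁ge⟩ := IHγ.1 α hlt g' hg'
          obtain ⟨δ₂, hδ₂θ, h₂id, h₂ge⟩ := A.succ_split γ hγtop f' hf'
          have hθαγ : A.θ α ≤ A.θ γ := A.theta_le hlt hγtop.le hg'
          have hg'b := A.mono α γ hlt hγtop.le g' hg'
          have hf'le := A.le_ap hγβ hβtop hf'
          refine ⟨min δ₁ δ₂, (min_le_left _ _).trans hδ₁θ, ?_, ?_⟩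
          · intro x hx
            have hx1 : x < δ₁ := lt_of_lt_of_le hx (min_le_left _ _)
            have hx2 : x < δ₂ := lt_of_lt_of_le hx (min_le_right _ _)
            have hxθα : x < A.θ α := hx1.trans_le hδ₁θ
            rw [hfac x hxθα, h₁id x hx1, h₂id x hx2]
          · intro x hmin hx
            rw [hfac x hx]
            rcases le_or_gt δ₁ x with h | h
            · have h1 : A.θ α ≤ A.ap g' x := h₁ge x h hx
              have h2 : A.ap g' x < A.θ γ := hg'b.1 x hx
              exact h1.trans (hf'le _ h2)
            · have h2 : δ₂ ≤ x := by
                by_contra hc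
                push_neg at hc
                exact absurd hmin (not_le.2 (lt_min h hc))
              rw [h₁id x h]
              exact hθαγ.trans (h₂ge x h2 (hx.trans_le hθαγ))
      · intro α hα
        have hαγ : α ≤ γ := by
          rw [Ordinal.add_one_eq_succ] at hα; exact Order.lt_succ_iff.1 hα
        rcases eq_or_lt_of_le hαγ with rfl | hlt
        · exact A.succ_id α hγtop
        · obtain ⟨g, hg, hgid⟩ := IHγ.2 α hlt
          obtain ⟨i, hi, hiid⟩ := A.succ_id γ hγtop
          obtain ⟨h', hh', hfac⟩ := A.comp_mem α γ (γ + 1) hlt hγβ hβtop i hi g hg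
          refine ⟨h', hh', fun x hx => ?_⟩
          rw [hfac x hx, hgid x hx]
          exact hiid x (hx.trans_le (A.theta_le hlt hγtop.le hg))
    · -- limit case
      have hsub : ∀ γ, γ < β → γ ≤ A.top := fun γ h => (le_of_lt h).trans hβtop
      -- every family into β is nonempty
      have hne : ∀ α, α < β → ∃ f, f ∈ A.Fam α β := by
        intro α hα
        obtain ⟨γ₀, hγ₀, f, hf, _, _, _⟩ :=
          A.limit_cover β hβtop hlim 0 (A.pos β hβtop)
        rcases lt_trichotomy α γ₀ with h | h | h
        · obtain ⟨g, hg, _⟩ := (IH γ₀ hγ₀ (hsub _ hγ₀)).2 α h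
          obtain ⟨h', hh', _⟩ := A.comp_mem α γ₀ β h hγ₀ hβtop f hf g hg
          exact ⟨h', hh'⟩
        · exact ⟨f, h ▸ hf⟩
        · obtain ⟨f', hf', _⟩ := A.comp_factor γ₀ α β h hα hβtop f hf
          exact ⟨f', hf'⟩
      have hθlt : ∀ α, α < β → A.θ α < A.θ β := by
        intro α hα
        have h1 : α + 1 < β := by
          rw [Ordinal.add_one_eq_succ]; exact hlim.succ_lt hα
        obtain ⟨f, hf⟩ := hne _ h1
        exact (A.theta_succ_lt α (lt_of_lt_of_le hα hβtop)).trans_le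
          (A.theta_le h1 hβtop hf)
      have hθlt2 : ∀ α γ, α < γ → γ < β → A.θ α < A.θ γ := by
        intro α γ h1 h2
        have hs : α + 1 ≤ γ := by
          rw [Ordinal.add_one_eq_succ]; exact Order.succ_le_of_lt h1
        have t1 : A.θ α < A.θ (α + 1) :=
          A.theta_succ_lt α (lt_of_lt_of_le (h1.trans h2) hβtop)
        rcases eq_or_lt_of_le hs with rfl | hlt2
        · exact t1
        · obtain ⟨g, hg, _⟩ := (IH γ h2 (hsub _ h2)).2 (α + 1) hlt2
          exact t1.trans_le (A.theta_le hlt2 (hsub _ h2) hg)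
      have hsplit : ∀ α, α < β → ∀ f ∈ A.Fam α β, ∃ δ, δ ≤ A.θ α ∧
          (∀ x, x < δ → A.ap f x = x) ∧
          (∀ x, δ ≤ x → x < A.θ α → A.θ α ≤ A.ap f x) := by
        intro α hα f hf
        by_cases hid : ∀ x, x < A.θ α → A.ap f x = x
        · exact ⟨A.θ α, le_rfl, fun x hx => hid x hx,
            fun x h1 h2 => absurd h2 (not_lt.2 h1)⟩
        · push_neg at hid
          obtain ⟨x₀, hx₀, hne0⟩ := hid
          have hS : {x | x < A.θ α ∧ A.ap f x ≠ x}.Nonempty := ⟨x₀, hx₀, hne0⟩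
          set δ := Ordinal.lt_wf.min _ hS with hδdef
          have hδS := Ordinal.lt_wf.min_mem _ hS
          have hδθ : δ < A.θ α := hδS.1
          have hfδ : A.ap f δ ≠ δ := hδS.2
          have hbelow : ∀ y, y < δ → A.ap f y = y := by
            intro y hy
            by_contra hne'
            exact Ordinal.lt_wf.not_lt_min {x | x < A.θ α ∧ A.ap f x ≠ x} (x := y) ⟨hy.trans hδθ, hne'⟩ hy
          have hfδgt : δ < A.ap f δ :=
            lt_of_le_of_ne (A.le_ap hα hβtop hf δ hδθ) (Ne.symm hfδ)
          obtain ⟨η, hη, h, hh, ρ, hρ, hhρ⟩ :=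
            A.limit_cover β hβtop hlim δ (hδθ.trans_le (A.theta_le hα hβtop hf))
          obtain ⟨γ', hαγ', hηγ', hγ'β, k, hk, ⟨j₁, hj₁, hj₁e⟩, ⟨j₂, hj₂, hj₂e⟩⟩ :=
            A.limit_amalg β hβtop hlim α η hα hη f hf h hh
          have hγ'top := hsub _ hγ'β
          have hkle := A.le_ap hγ'β hβtop hk
          have hj₁b := A.mono α γ' hαγ' hγ'top j₁ hj₁
          have hj₂b := A.mono η γ' hηγ' hγ'top j₂ hj₂
          have hky : ∀ y, y < δ → A.ap j₁ y = y ∧ A.ap k y = y := by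
            intro y hy
            have hyθ : y < A.θ α := hy.trans hδθ
            have h1 : A.ap k (A.ap j₁ y) = y := (hj₁e y hyθ).symm.trans (hbelow y hy)
            have h2 : y ≤ A.ap j₁ y := A.le_ap hαγ' hγ'top hj₁ y hyθ
            have h3 : A.ap j₁ y ≤ A.ap k (A.ap j₁ y) := hkle _ (hj₁b.1 y hyθ)
            have h4 : A.ap j₁ y = y := le_antisymm (h3.trans_eq h1) h2
            rw [h4] at h1
            exact ⟨h4, h1⟩
          have hu1 : A.ap k (A.ap j₂ ρ) = δ := (hj₂e ρ hρ).symm.trans hhρ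
          have hu2 : A.ap j₂ ρ ≤ δ := (hkle _ (hj₂b.1 ρ hρ)).trans_eq hu1
          have hu3 : A.ap j₂ ρ = δ := by
            rcases eq_or_lt_of_le hu2 with h' | h'
            · exact h'
            · exfalso
              have := (hky _ h').2
              rw [hu1] at this
              exact absurd this.symm (ne_of_lt h')
          have hkδ : A.ap k δ = δ := by rw [hu3] at hu1; exact hu1
          have hδγ' : δ < A.θ γ' := hu3 ▸ hj₂b.1 ρ hρ
          have hj₁δ : A.ap j₁ δ ≠ δ := by
            intro he
            have h5 := hj₁e δ hδθ
            rw [he, hkδ] at h5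
            exact hfδ h5
          obtain ⟨δ₁, hδ₁θ, hδ₁id, hδ₁ge⟩ := (IH γ' hγ'β hγ'top).1 α hαγ' j₁ hj₁
          have hδ₁le : δ₁ ≤ δ := by
            by_contra hc
            push_neg at hc
            exact hj₁δ (hδ₁id δ hc)
          have key : A.θ α ≤ A.ap f δ := by
            have h5 := hj₁e δ hδθ
            have h6 : A.θ α ≤ A.ap j₁ δ := hδ₁ge δ hδ₁le hδθ
            have h7 : A.ap j₁ δ ≤ A.ap k (A.ap j₁ δ) := hkle _ (hj₁b.1 δ hδθ)
            rw [h5]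
            exact h6.trans h7
          refine ⟨δ, hδθ.le, hbelow, ?_⟩
          intro x hδx hx
          rcases eq_or_lt_of_le hδx with rfl | h'
          · exact key
          · exact key.trans ((A.mono α β hα hβtop f hf).2 δ x h' hx).le
      refine ⟨hsplit, ?_⟩
      intro α hα
      obtain ⟨η₀, hη₀, f₀, hf₀, ν₀, hν₀, he₀⟩ :=
        A.limit_cover β hβtop hlim (A.θ α) (hθlt α hα)
      obtain ⟨η, hαη, hηβ, f, hf, ν, hν, he⟩ :
          ∃ η, α < η ∧ η < β ∧ ∃ f ∈ A.Fam η β, ∃ ν, ν < A.θ η ∧ A.ap f ν = A.θ α := by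
        rcases lt_or_ge α η₀ with h | h
        · exact ⟨η₀, h, hη₀, f₀, hf₀, ν₀, hν₀, he₀⟩
        · have h1 : η₀ < α + 1 := by
            rw [Ordinal.add_one_eq_succ]; exact Order.lt_succ_iff.2 h
          have h2 : α + 1 < β := by
            rw [Ordinal.add_one_eq_succ]; exact hlim.succ_lt hα
          have h3 : α < α + 1 := by
            rw [Ordinal.add_one_eq_succ]; exact Order.lt_succ α
          obtain ⟨f', hf', g', hg', hfac⟩ :=
            A.comp_factor η₀ (α + 1) β h1 h2 hβtop f₀ hf₀
          refine ⟨α + 1, h3, h2, f', hf', A.ap g' ν₀,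
            (A.mono η₀ (α + 1) h1 (hsub _ h2) g' hg').1 ν₀ hν₀, ?_⟩
          rw [← hfac ν₀ hν₀]
          exact he₀
      obtain ⟨δf, hδfθ, hfid, hfge⟩ := hsplit η hηβ f hf
      have hθαη : A.θ α < A.θ η := hθlt2 α η hαη hηβ
      have hνδ : ν < δf := by
        by_contra hc
        push_neg at hc
        have h5 := hfge ν hc hν
        rw [he] at h5
        exact absurd h5 (not_le.2 hθαη)
      have hνθα : ν = A.θ α := by rw [← he]; exact (hfid ν hνδ).symm
      have hfidθ : ∀ x, x < A.θ α → A.ap f x = x := by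
        intro x hx
        exact hfid x (lt_of_lt_of_le (hx.trans_eq hνθα.symm) hνδ.le)
      obtain ⟨g, hg, hgid⟩ := (IH η hηβ (hsub _ hηβ)).2 α hαη
      obtain ⟨h', hh', hfac⟩ := A.comp_mem α η β hαη hηβ hβtop f hf g hg
      refine ⟨h', hh', fun x hx => ?_⟩
      rw [hfac x hx, hgid x hx]
      exact hfidθ x hx

end AbsMorass
namespace SimplifiedMorass

/-- A simplified morass yields an abstract morass structure. -/
def toAbs (S : SimplifiedMorass) : AbsMorass (Ordinal.{0} → Ordinal.{0}) where
  θ := S.θ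
  top := S.κ.ord
  Fam := S.F
  ap := id
  top_limit := Cardinal.isSuccLimit_ord S.kappa_reg.aleph0_le
  pos := by
    intro α hα
    rcases eq_or_lt_of_le hα with rfl | h
    · rw [S.theta_top]
      exact (Cardinal.isSuccLimit_ord (S.kappa_reg.aleph0_le.trans (Order.le_succ _))).pos
    · exact S.theta_pos α h
  mono := S.F_maps
  comp_mem := S.F_comp_mem
  comp_factor := S.F_comp_factor
  succ_id := fun α hα => (S.F_succ α hα).1
  succ_split := by
    intro α hα f hf
    have hs : α + 1 ≤ S.κ.ord := by
      rw [Ordinal.add_one_eq_succ]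
      exact ((Cardinal.isSuccLimit_ord S.kappa_reg.aleph0_le).succ_lt hα).le
    have hαs : α < α + 1 := by
      rw [Ordinal.add_one_eq_succ]; exact Order.lt_succ α
    obtain ⟨h, hh, ⟨δ, hδθ, hid, hge⟩, huniq⟩ := (S.F_succ α hα).2
    rcases huniq f hf with hidf | hhf
    · exact ⟨S.θ α, le_rfl, fun x hx => hidf x hx,
        fun x h1 h2 => absurd h2 (not_lt.2 h1)⟩
    · refine ⟨δ, hδθ.le, fun x hx => (hhf x (hx.trans hδθ)).trans (hid x hx), ?_⟩
      intro x hδx hx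
      show S.θ α ≤ f x
      rw [hhf x hx]
      rcases eq_or_lt_of_le hδx with rfl | h'
      · exact hge
      · exact hge.trans ((S.F_maps α (α + 1) hαs hs h hh).2 δ x h' hx).le
  theta_succ_lt := by
    intro α hα
    have hs : α + 1 ≤ S.κ.ord := by
      rw [Ordinal.add_one_eq_succ]
      exact ((Cardinal.isSuccLimit_ord S.kappa_reg.aleph0_le).succ_lt hα).le
    have hαs : α < α + 1 := by
      rw [Ordinal.add_one_eq_succ]; exact Order.lt_succ α
    obtain ⟨h, hh, ⟨δ, hδθ, _, hge⟩, _⟩ := (S.F_succ α hα).2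
    exact hge.trans_lt ((S.F_maps α (α + 1) hαs hs h hh).1 δ hδθ)
  limit_amalg := S.F_limit
  limit_cover := fun β hβ hlim τ hτ => S.F_cover β hβ hlim.pos τ hτ

/-- Part (a) of Lemma 2.5: identity maps belong to each `F ζ ξ`. -/
theorem id_mem (S : SimplifiedMorass) (ζ ξ : Ordinal) (h1 : ζ < ξ) (h2 : ξ ≤ S.κ.ord) :
    ∃ g ∈ S.F ζ ξ, ∀ x, x < S.θ ζ → g x = x :=
  ((S.toAbs).main ξ h2).2 ζ h1

end SimplifiedMorass
namespace Morass2

theorem theta_succ_lt' (M : Morass2) (α : Ordinal) (hα : α < M.κ.ord) :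
    M.θ α < M.θ (α + 1) := by
  obtain ⟨h, hh, hR, _⟩ := (M.F_amalg α hα).2.1
  obtain ⟨hemb, η, hηθ, _, hshift, _⟩ := hR
  have hcan : η + (M.θ α - η) = M.θ α := Ordinal.add_sub_cancel_of_le hηθ.le
  have h1 := hshift (M.θ α - η) (le_of_eq hcan)
  rw [hcan] at h1
  have h2 : h.base (M.θ α) = M.θ (α + 1) := hemb.2.1
  rw [h1] at h2
  have hpos : 0 < M.θ α - η := by
    rcases eq_zero_or_pos (M.θ α - η) with h0 | h0
    · rw [h0, add_zero] at hcan
      exact absurd hcan (ne_of_lt hηθ)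
    · exact h0
  calc M.θ α = M.θ α + 0 := (add_zero _).symm
    _ < M.θ α + (M.θ α - η) := (add_lt_add_iff_left (M.θ α)).2 hpos
    _ = M.θ (α + 1) := h2

theorem succ_id' (M : Morass2) (α : Ordinal) (hα : α < M.κ.ord) :
    ∃ i ∈ M.F α (α + 1), ∀ x, x < M.θ α → i.base x = x := by
  classical
  have hκlim : Order.IsSuccLimit M.κ.ord := Cardinal.isSuccLimit_ord M.kappa_reg.aleph0_le
  have hsucc : α + 1 < M.κ.ord := by
    rw [Ordinal.add_one_eq_succ]; exact hκlim.succ_lt hα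
  have hθlt : M.θ α < M.θ (α + 1) := M.theta_succ_lt' α hα
  have hθbtop : M.θ (α + 1) ≤ M.gap1.κ.ord := by
    rw [M.gap1_kappa]
    exact (M.theta_lt (α + 1) hsucc).le.trans (Cardinal.ord_le_ord.2 (Order.le_succ _))
  obtain ⟨gid, hgid, hgide⟩ := M.gap1.id_mem (M.θ α) (M.θ (α + 1)) hθlt hθbtop
  have hcomp : ∀ (ζ : Ordinal) (b : Ordinal → Ordinal), ∃ c : Ordinal → Ordinal,
      ζ < M.θ α → b ∈ M.gap1.F ζ (M.θ α) →
        c ∈ M.gap1.F ζ (M.θ (α + 1)) ∧ ∀ x, x < M.gap1.θ ζ → c x = gid (b x) := by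
    intro ζ b
    by_cases h : ζ < M.θ α ∧ b ∈ M.gap1.F ζ (M.θ α)
    · obtain ⟨c, hc1, hc2⟩ :=
        M.gap1.F_comp_mem ζ (M.θ α) (M.θ (α + 1)) h.1 hθlt hθbtop gid hgid b h.2
      exact ⟨c, fun _ _ => ⟨hc1, hc2⟩⟩
    · exact ⟨b, fun h1 h2 => absurd ⟨h1, h2⟩ h⟩
  choose gm hgm using hcomp
  set f : PreEmb := {
    base := fun ζ => if ζ < M.θ α then ζ else M.θ (α + 1)
    pmap := fun ζ x => if ζ < M.θ α then x else gid x
    gmap := fun ζ ξ b x => if ξ < M.θ α then b x else gm ζ b x } with hfdef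
  have hbase1 : ∀ ζ, ζ < M.θ α → f.base ζ = ζ := by
    intro ζ h; rw [hfdef]; exact if_pos h
  have hbase2 : f.base (M.θ α) = M.θ (α + 1) := by
    rw [hfdef]; exact if_neg (lt_irrefl _)
  have hpm1 : ∀ ζ x, ζ < M.θ α → f.pmap ζ x = x := by
    intro ζ x h; rw [hfdef]; exact if_pos h
  have hpm2 : ∀ x, f.pmap (M.θ α) x = gid x := by
    intro x; rw [hfdef]; exact if_neg (lt_irrefl _)
  have hgm1 : ∀ ζ ξ (b : Ordinal → Ordinal) x, ξ < M.θ α → f.gmap ζ ξ b x = b x := by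
    intro ζ ξ b x h; rw [hfdef]; exact if_pos h
  have hgm2 : ∀ ζ (b : Ordinal → Ordinal) x, f.gmap ζ (M.θ α) b x = gm ζ b x := by
    intro ζ b x; rw [hfdef]; exact if_neg (lt_irrefl _)
  have hgmfun2 : ∀ ζ (b : Ordinal → Ordinal), f.gmap ζ (M.θ α) b = gm ζ b :=
    fun ζ b => funext fun x => hgm2 ζ b x
  have hLB : LeftBranching M.gap1.θ M.gap1.F M.δ (M.θ α) (M.θ (α + 1)) f := by
    refine ⟨⟨?_, hbase2, ?_, ?_, ?_, ?_, ?_⟩, ?_, ?_, ?_, ?_, ?_⟩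
    · -- base strictly increasing
      intro x y hxy hy
      rcases eq_or_lt_of_le hy with rfl | h
      · rw [hbase1 x hxy, hbase2]
        exact hxy.trans hθlt
      · rw [hbase1 x (hxy.trans h), hbase1 y h]
        exact hxy
    · -- pmap order preserving into φ (base ζ)
      intro ζ hζ
      rcases eq_or_lt_of_le hζ with rfl | h
      · constructor
        · intro x hx
          rw [hpm2 x, hbase2]
          exact (M.gap1.F_maps (M.θ α) (M.θ (α + 1)) hθlt hθbtop gid hgid).1 x hx
        · intro x y hxy hy
          rw [hpm2 x, hpm2 y]
          exact (M.gap1.F_maps (M.θ α) (M.θ (α + 1)) hθlt hθbtop gid hgid).2 x y hxy hy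
      · constructor
        · intro x hx
          rw [hpm1 ζ x h, hbase1 ζ h]
          exact hx
        · intro x y hxy hy
          rw [hpm1 ζ x h, hpm1 ζ y h]
          exact hxy
    · -- gmap maps G into G
      intro ζ ξ hζξ hξ b hb
      rcases eq_or_lt_of_le hξ with rfl | h
      · rw [hgmfun2 ζ b, hbase1 ζ hζξ, hbase2]
        exact (hgm ζ b hζξ hb).1
      · have : f.gmap ζ ξ b = b := funext fun x => hgm1 ζ ξ b x h
        rw [this, hbase1 ζ (hζξ.trans h), hbase1 ξ h]
        exact hb
    · -- splitting points
      intro ζ hζ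
      rw [hpm1 ζ _ hζ, hbase1 ζ hζ]
    · -- gmap respects composition
      intro ζ ξ η hζξ hξη hη b hb c hc cb hcb hcbe x hx
      rcases eq_or_lt_of_le hη with rfl | h
      · have hξθ : ξ < M.θ α := hξη
        have hζθ : ζ < M.θ α := hζξ.trans hξη
        have hξtop : ξ ≤ M.gap1.κ.ord := ((hξθ.trans hθlt).le).trans hθbtop
        have hbx : b x < M.gap1.θ ξ := (M.gap1.F_maps ζ ξ hζξ hξtop b hb).1 x hx
        rw [hgm2 ζ cb x, hgm1 ζ ξ b x hξθ, hgm2 ξ c (b x)]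
        rw [(hgm ζ cb hζθ hcb).2 x hx, (hgm ξ c hξθ hc).2 (b x) hbx]
        rw [hcbe x hx]
      · rw [hgm1 ζ η cb x h, hgm1 ξ η c _ h, hgm1 ζ ξ b x (hξη.trans h)]
        exact hcbe x hx
    · -- pmap/gmap compatibility
      intro ζ ξ hζξ hξ b hb x hx
      rcases eq_or_lt_of_le hξ with rfl | h
      · rw [hpm2 (b x), hgm2 ζ b, hpm1 ζ x hζξ]
        exact ((hgm ζ b hζξ hb).2 x hx).symm
      · rw [hpm1 ξ (b x) h, hgm1 ζ ξ b _ h, hpm1 ζ x (hζξ.trans h)]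
    · exact hbase1
    · intro ζ hζ x _
      exact hpm1 ζ x hζ
    · intro ζ ξ hζξ hξ b hb x hx
      exact hgm1 ζ ξ b x hξ
    · exact ⟨gid, hgid, fun x hx => hpm2 x⟩
    · intro ζ hζ b hb x hx
      rw [hgm2 ζ b x, hpm2 (b x)]
      exact (hgm ζ b hζ hb).2 x hx
  obtain ⟨f', hf', hag⟩ := (M.F_amalg α hα).1 f hLB
  refine ⟨f', hf', fun x hx => ?_⟩
  rw [← hag.1 x hx.le]
  exact hbase1 x hx

/-- The embedding families of a `(κ,2)`-morass, acting via `base`, form an abstract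
morass structure. -/
def toAbs (M : Morass2) : AbsMorass PreEmb where
  θ := M.θ
  top := M.κ.ord
  Fam := M.F
  ap := fun f => f.base
  top_limit := Cardinal.isSuccLimit_ord M.kappa_reg.aleph0_le
  pos := by
    intro α hα
    rcases eq_or_lt_of_le hα with rfl | h
    · rw [M.theta_top]
      exact (Cardinal.isSuccLimit_ord (M.kappa_reg.aleph0_le.trans (Order.le_succ _))).pos
    · exact M.theta_pos α h
  mono := by
    intro α β hαβ hβ f hf
    have he := M.F_emb α β hαβ hβ f hf
    refine ⟨fun x hx => ?_, fun x y hxy hy => he.1 x y hxy hy.le⟩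
    have h1 := he.1 x (M.θ α) hx le_rfl
    rwa [he.2.1] at h1
  comp_mem := by
    intro α β γ h1 h2 h3 f hf g hg
    obtain ⟨h, hh, hag⟩ := M.F_comp_mem α β γ h1 h2 h3 f hf g hg
    exact ⟨h, hh, fun x hx => hag.1 x hx.le⟩
  comp_factor := by
    intro α β γ h1 h2 h3 h hh
    obtain ⟨f, hf, g, hg, hag⟩ := M.F_comp_factor α β γ h1 h2 h3 h hh
    exact ⟨f, hf, g, hg, fun x hx => hag.1 x hx.le⟩
  succ_id := M.succ_id'
  succ_split := by
    intro α hα f hf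
    rcases (M.F_amalg α hα).2.2 f hf with hL | hR
    · exact ⟨M.θ α, le_rfl, hL.2.1, fun x h1 h2 => absurd h2 (not_lt.2 h1)⟩
    · obtain ⟨hemb, η, hηθ, hbelow, hshift, _⟩ := hR
      refine ⟨η, hηθ.le, hbelow, ?_⟩
      intro x hηx hx
      have hcan : η + (x - η) = x := Ordinal.add_sub_cancel_of_le hηx
      have h1 := hshift (x - η) (by rw [hcan]; exact hx.le)
      rw [hcan] at h1
      show M.θ α ≤ f.base x
      rw [h1]
      exact le_self_add
  theta_succ_lt := M.theta_succ_lt'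
  limit_amalg := by
    intro β hβ hlim α₁ α₂ h₁ h₂ f₁ hf₁ f₂ hf₂
    obtain ⟨γ, hγ₁, hγ₂, hγβ, g, hg, ⟨j₁, hj₁, hag₁⟩, j₂, hj₂, hag₂⟩ :=
      M.F_limit β hβ hlim α₁ α₂ h₁ h₂ f₁ hf₁ f₂ hf₂
    exact ⟨γ, hγ₁, hγ₂, hγβ, g, hg, ⟨j₁, hj₁, fun x hx => hag₁.1 x hx.le⟩,
      j₂, hj₂, fun x hx => hag₂.1 x hx.le⟩
  limit_cover := M.F_cover_theta

end Morass2
/-- Lemma 2.5 of the paper: (a) for `ζ < ξ ≤ κ⁺` the identity `id ↾ φ ζ` belongs to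
`G ζ ξ`; (b) for `α < β ≤ κ` there is an embedding `g ∈ F α β` with `g ↾ θ α = id`. -/
theorem morass2_identity_maps (M : Morass2) :
    (∀ ζ ξ, ζ < ξ → ξ ≤ (Order.succ M.κ).ord →
      ∃ g ∈ M.gap1.F ζ ξ, ∀ x, x < M.gap1.θ ζ → g x = x) ∧
    (∀ α β, α < β → β ≤ M.κ.ord →
      ∃ g ∈ M.F α β, ∀ x, x < M.θ α → g.base x = x) := by
  constructor
  · intro ζ ξ h1 h2
    refine M.gap1.id_mem ζ ξ h1 ?_
    rw [M.gap1_kappa]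
    exact h2
  · intro α β h1 h2
    exact ((M.toAbs).main β h2).2 α h1
end
end

section
/- In the partial order P, the family {p_β : β < ω₁}, where p_β : {0,1} × {β} → 2 is the condition with p_β(0,β) = 1 and p_β(1,β) = 0, is an antichain of cardinality ω₁; in particular, P does not satisfy the countable chain condition. -/
noncomputable section

open Cardinal Set

/-! ### The forcing `P` of finite partial functions `a_p × b_p → 2`, `a_p × b_p ⊆ ω₂ × ω₁` -/

/-- Conditions are coded as sets of pairs `⟨⟨α,β⟩,ε⟩` (the graph of the function). -/
abbrev CondR : Type 1 := Set ((Ordinal × Ordinal) × Bool)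

/-- `a_p`, the set of first coordinates of the domain. -/
def asetR (p : CondR) : Set Ordinal := {α | ∃ β b, ((α, β), b) ∈ p}

/-- `b_p`, the set of second coordinates of the domain. -/
def bsetR (p : CondR) : Set Ordinal := {β | ∃ α b, ((α, β), b) ∈ p}

/-- `p ∈ P`: a finite function `a_p × b_p → 2` with `a_p × b_p ⊆ ω₂ × ω₁`. -/
def IsCondR (p : CondR) : Prop :=
  p.Finite ∧ (∀ x b b', (x, b) ∈ p → (x, b') ∈ p → b = b') ∧
  (∀ α ∈ asetR p, ∀ β ∈ bsetR p, ∃ b, ((α, β), b) ∈ p) ∧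
  (∀ z ∈ p, z.1.1 < (Cardinal.aleph 2).ord ∧ z.1.2 < (Cardinal.aleph 1).ord)

/-- `p ≤ q` iff `q ⊆ p` and `p (α₁, β) ≤ p (α₂, β)` for all `α₁ < α₂ ∈ a_q` and all
`β ∈ b_p - b_q`. -/
def leR (p q : CondR) : Prop :=
  q ⊆ p ∧ ∀ α₁ α₂ β b₁ b₂, α₁ ∈ asetR q → α₂ ∈ asetR q → α₁ < α₂ →
    β ∈ bsetR p → β ∉ bsetR q → ((α₁, β), b₁) ∈ p → ((α₂, β), b₂) ∈ p → b₁ ≤ b₂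

/-- `p ↾ (a × b)`. -/
def restrictR (p : CondR) (a b : Ordinal) : CondR := {z ∈ p | z.1.1 < a ∧ z.1.2 < b}

/-- The action `p ↦ π [p]` of an order preserving map `π` (acting on the first
coordinates) on conditions. -/
def mapCondR (f : Ordinal → Ordinal) (p : CondR) : CondR :=
  (fun z => ((f z.1.1, z.1.2), z.2)) '' p

/-- `h⁻¹ [p] ↾ (a × b)`. -/
def invCondR (f : Ordinal → Ordinal) (a b : Ordinal) (p : CondR) : CondR :=
  {z | z.1.1 < a ∧ z.1.2 < b ∧ ((f z.1.1, z.1.2), z.2) ∈ p}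


/-- The conditions `p_β : {0,1} × {β} → 2` with `p_β (0,β) = 1` and `p_β (1,β) = 0`. -/
def pB (β : Ordinal) : CondR :=
  {(((0 : Ordinal), β), true), (((1 : Ordinal), β), false)}

lemma mem_pB {β : Ordinal} {z : (Ordinal × Ordinal) × Bool} :
    z ∈ pB β ↔ z = (((0:Ordinal), β), true) ∨ z = (((1:Ordinal), β), false) := by
  simp [pB]

lemma aset_pB (β : Ordinal) : asetR (pB β) = {0, 1} := by
  ext α; simp only [asetR, mem_setOf_eq, mem_pB, Prod.mk.injEq]
  constructor
  · rintro ⟨β', b, h | h⟩ <;> simp_all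
  · rintro (h | h)
    · exact ⟨β, true, Or.inl (by simp [h])⟩
    · exact ⟨β, false, Or.inr (by simp_all)⟩

lemma bset_pB (β : Ordinal) : bsetR (pB β) = {β} := by
  ext β'; simp only [bsetR, mem_setOf_eq, mem_pB, Prod.mk.injEq]
  constructor
  · rintro ⟨α, b, h | h⟩ <;> simp_all
  · rintro h; exact ⟨0, true, Or.inl (by simp_all)⟩

lemma pB_inj : Function.Injective pB := by
  intro β β' h
  have : (((0:Ordinal), β), true) ∈ pB β' := h ▸ mem_pB.mpr (Or.inl rfl)
  rcases mem_pB.mp this with h' | h' <;> simp_all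

lemma one_lt_ord2 : (1 : Ordinal) < (Cardinal.aleph 2).ord := by
  calc (1:Ordinal) < Ordinal.omega0 := Ordinal.one_lt_omega0
  _ = (Cardinal.aleph0).ord := Cardinal.ord_aleph0.symm
  _ ≤ _ := Cardinal.ord_le_ord.mpr (Cardinal.aleph0_le_aleph 2)

lemma isCond_pB {β : Ordinal} (hβ : β < (Cardinal.aleph 1).ord) : IsCondR (pB β) := by
  refine ⟨(Set.finite_singleton _).insert _, ?_, ?_, ?_⟩
  · intro x b b' h h'
    rcases mem_pB.mp h with h | h <;> rcases mem_pB.mp h' with h' | h' <;> simp_all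
  · intro α hα β' hβ'
    rw [aset_pB] at hα; rw [bset_pB] at hβ'
    rcases hα with h | h
    · exact ⟨true, mem_pB.mpr (Or.inl (by simp_all))⟩
    · exact ⟨false, mem_pB.mpr (Or.inr (by simp_all))⟩
  · intro z hz
    rcases mem_pB.mp hz with h | h <;> subst h <;>
      exact ⟨lt_of_le_of_lt (by simp) one_lt_ord2, hβ⟩

/-- The family `{p_β : β < ω₁}` is an antichain of `P` of cardinality `ω₁`; in
particular, `P` does not satisfy the countable chain condition. -/
theorem chain_forcing_P_not_ccc :
    (∀ p ∈ {p : CondR | ∃ β, β < (Cardinal.aleph 1).ord ∧ p = pB β}, IsCondR p) ∧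
    Set.Pairwise {p : CondR | ∃ β, β < (Cardinal.aleph 1).ord ∧ p = pB β}
      (fun p q => ¬∃ r, IsCondR r ∧ leR r p ∧ leR r q) ∧
    Cardinal.mk {p : CondR | ∃ β, β < (Cardinal.aleph 1).ord ∧ p = pB β} =
      Cardinal.aleph.{1} 1 ∧
    ¬∀ A : Set CondR, (∀ p ∈ A, IsCondR p) →
      (A.Pairwise fun p q => ¬∃ r, IsCondR r ∧ leR r p ∧ leR r q) → A.Countable := by
  have hcond : ∀ p ∈ {p : CondR | ∃ β, β < (Cardinal.aleph 1).ord ∧ p = pB β}, IsCondR p := by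
    rintro p ⟨β, hβ, rfl⟩; exact isCond_pB hβ
  have hpair : Set.Pairwise {p : CondR | ∃ β, β < (Cardinal.aleph 1).ord ∧ p = pB β}
      (fun p q => ¬∃ r, IsCondR r ∧ leR r p ∧ leR r q) := by
    rintro p ⟨β, hβ, rfl⟩ q ⟨β', hβ', rfl⟩ hne ⟨r, _, ⟨hsub, hmono⟩, ⟨hsub', _⟩⟩
    have hββ' : β ≠ β' := fun h => hne (by rw [h])
    have h0 : (((0:Ordinal), β'), true) ∈ r := hsub' (mem_pB.mpr (Or.inl rfl))
    have h1 : (((1:Ordinal), β'), false) ∈ r := hsub' (mem_pB.mpr (Or.inr rfl))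
    have : (true : Bool) ≤ false := by
      refine hmono 0 1 β' true false ?_ ?_ zero_lt_one ⟨0, true, h0⟩ ?_ h0 h1
      · rw [aset_pB]; exact Or.inl rfl
      · rw [aset_pB]; exact Or.inr rfl
      · rw [bset_pB]; exact fun h => hββ' (h.symm)
    exact absurd this (by decide)
  have hmk : Cardinal.mk {p : CondR | ∃ β, β < (Cardinal.aleph 1).ord ∧ p = pB β} =
      Cardinal.aleph.{1} 1 := by
    have e : ({p : CondR | ∃ β, β < (Cardinal.aleph 1).ord ∧ p = pB β}) =
        pB '' (Set.Iio (Cardinal.aleph 1).ord) := by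
      ext p; simp [Set.mem_image, eq_comm]
    rw [e, Cardinal.mk_image_eq pB_inj, Ordinal.mk_Iio_ordinal, Cardinal.card_ord,
      Cardinal.lift_aleph]
    simp
  refine ⟨hcond, hpair, hmk, fun h => ?_⟩
  have := (h _ hcond hpair).le_aleph0
  rw [hmk] at this
  exact absurd (this.trans_lt (by exact_mod_cast Cardinal.aleph0_lt_aleph_one)) (lt_irrefl _)
end
end
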